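/- Let p be a prime number, and let N ≥ 1, n ≥ 1, ν ≥ 0 be integers with n ≢ 0 (mod p−1). If v_p(N−1) ≥ ν + 1 + v_p(∏_{k=0}^{n} (1+k)!) + v_p(n), then B_{N,n}/n ≡ B_n/n (mod p^{ν+1}), i.e., the p-adic valuation of B_{N,n}/n − B_n/n is at least ν+1. -/

import Mathlib

set_option linter.unusedSectionVars false
set_option linter.unusedVariables false
set_option maxHeartbeats 1000000

open Finset


/-- The power series ∑_{i≥0} (N!/(N+i)!) xⁱ over ℚ. -/
noncomputable def hgSeries (N : ℕ) : PowerSeries ℚ :=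
  PowerSeries.mk fun i => (N.factorial : ℚ) / ((N + i).factorial : ℚ)

/-- The hypergeometric Bernoulli number `B_{N,n}`, defined so that
`∑ (B_{N,n}/n!) xⁿ` is the multiplicative inverse of `hgSeries N` in ℚ[[x]]. -/
noncomputable def hB (N n : ℕ) : ℚ :=
  (n.factorial : ℚ) * PowerSeries.coeff n (hgSeries N)⁻¹

noncomputable def hc (N i : ℕ) : ℚ := (N.factorial : ℚ) / ((N + i).factorial : ℚ)
noncomputable def ha (N m : ℕ) : ℚ := PowerSeries.coeff m (hgSeries N)⁻¹

lemma hg_coeff (N i : ℕ) : PowerSeries.coeff i (hgSeries N) = hc N i := by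
  simp [hgSeries, hc]

lemma hc_zero (N : ℕ) : hc N 0 = 1 := by
  simp [hc]
  exact N.factorial_ne_zero

lemma hg_const (N : ℕ) : PowerSeries.constantCoeff (hgSeries N) = 1 := by
  rw [← PowerSeries.coeff_zero_eq_constantCoeff, hg_coeff, hc_zero]

lemma ha_zero (N : ℕ) : ha N 0 = 1 := by
  unfold ha
  rw [PowerSeries.coeff_zero_eq_constantCoeff, PowerSeries.constantCoeff_inv, hg_const, inv_one]

lemma hg_recur (N m : ℕ) (hm : 1 ≤ m) :
    ∑ i ∈ Finset.range (m + 1), hc N i * ha N (m - i) = 0 := by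
  have h1 : hgSeries N * (hgSeries N)⁻¹ = 1 :=
    PowerSeries.mul_inv_cancel _ (by rw [hg_const]; norm_num)
  have h2 := congrArg (PowerSeries.coeff m) h1
  rw [PowerSeries.coeff_mul, PowerSeries.coeff_one, if_neg (by omega)] at h2
  rw [Finset.Nat.sum_antidiagonal_eq_sum_range_succ_mk] at h2
  simpa [hg_coeff, ha] using h2

lemma ha_recur (N m : ℕ) (hm : 1 ≤ m) :
    ha N m = -∑ i ∈ Finset.Icc 1 m, hc N i * ha N (m - i) := by
  have h := hg_recur N m hm
  rw [Finset.sum_range_succ'] at h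
  rw [← Finset.Ico_add_one_right_eq_Icc, Finset.sum_Ico_eq_sum_range]
  simp only [Nat.add_sub_cancel]
  have e : ∑ i ∈ Finset.range m, hc N (1+i) * ha N (m - (1+i))
      = ∑ i ∈ Finset.range m, hc N (i+1) * ha N (m - (i+1)) :=
    Finset.sum_congr rfl fun i _ => by rw [Nat.add_comm]
  rw [e]
  have h0 : hc N 0 * ha N (m - 0) = ha N m := by
    rw [hc_zero, one_mul, Nat.sub_zero]
  rw [h0] at h
  linarith
lemma exp_sub_one_eq : PowerSeries.exp ℚ - 1 = PowerSeries.X * hgSeries 1 := by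
  ext n
  cases n with
  | zero => simp [PowerSeries.coeff_exp]
  | succ n =>
      rw [PowerSeries.coeff_succ_X_mul]
      simp [PowerSeries.coeff_exp, hgSeries]
      rw [Nat.add_comm 1 n, Nat.factorial_succ]

lemma hg_one_inv : (hgSeries 1)⁻¹ = bernoulliPowerSeries ℚ := by
  rw [PowerSeries.inv_eq_iff_mul_eq_one (by rw [hg_const]; norm_num)]
  have h := bernoulliPowerSeries_mul_exp_sub_one ℚ
  rw [exp_sub_one_eq] at h
  refine mul_left_cancel₀ (PowerSeries.X_ne_zero (R := ℚ)) ?_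
  calc PowerSeries.X * (bernoulliPowerSeries ℚ * hgSeries 1)
      = bernoulliPowerSeries ℚ * (PowerSeries.X * hgSeries 1) := by ring
    _ = PowerSeries.X * 1 := by rw [h, mul_one]

lemma ha_one (m : ℕ) : PowerSeries.coeff m (hgSeries 1)⁻¹ = bernoulli m / m.factorial := by
  rw [hg_one_inv]
  simp [bernoulliPowerSeries]

open Finset
section A
variable {p : ℕ} [hpf : Fact p.Prime]
lemma pv_le_of_dvd {a b : ℕ} (h : a ∣ b) (hb : b ≠ 0) :
    padicValNat p a ≤ padicValNat p b := by
  obtain ⟨c, rfl⟩ := h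
  have ha : a ≠ 0 := by rintro rfl; simp at hb
  have hc : c ≠ 0 := by rintro rfl; simp at hb
  rw [padicValNat.mul ha hc]
  exact Nat.le_add_right _ _

def Vv (p n : ℕ) : ℕ := padicValNat p (∏ k ∈ Finset.range (n+1), (1+k).factorial)

lemma Q_ne_zero (n : ℕ) : (∏ k ∈ Finset.range (n+1), (1+k).factorial) ≠ 0 :=
  Finset.prod_ne_zero_iff.mpr fun k _ => (1+k).factorial_ne_zero

lemma T_ne_zero (a b : ℕ) : (∏ k ∈ Finset.Ico a b, (1+k).factorial) ≠ 0 :=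
  Finset.prod_ne_zero_iff.mpr fun k _ => (1+k).factorial_ne_zero

lemma V_split {i m : ℕ} (h : i ≤ m) :
    Vv p m = Vv p (m-i) + padicValNat p (∏ k ∈ Finset.Ico (m-i+1) (m+1), (1+k).factorial) := by
  unfold Vv
  rw [← padicValNat.mul (Q_ne_zero _) (T_ne_zero _ _)]
  congr 1
  rw [Finset.range_eq_Ico, Finset.range_eq_Ico]
  exact (Finset.prod_Ico_consecutive (fun k => (1+k).factorial) (m := 0) (n := m-i+1) (k := m+1) (by omega) (by omega)).symm

-- (m+1)! divides T when 1 ≤ i ≤ m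
lemma fact_dvd_T {i m : ℕ} (h1 : 1 ≤ i) (h : i ≤ m) :
    (m+1).factorial ∣ ∏ k ∈ Finset.Ico (m-i+1) (m+1), (1+k).factorial := by
  have hm : m ∈ Finset.Ico (m-i+1) (m+1) := by simp; omega
  have := Finset.dvd_prod_of_mem (fun k => (1+k).factorial) hm
  simpa [Nat.add_comm 1 m] using this

-- m! * (m+1)! divides T when 2 ≤ i ≤ m
lemma fact2_dvd_T {i m : ℕ} (h1 : 2 ≤ i) (h : i ≤ m) :
    m.factorial * (m+1).factorial ∣ ∏ k ∈ Finset.Ico (m-i+1) (m+1), (1+k).factorial := by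
  have hsub : ({m-1, m} : Finset ℕ) ⊆ Finset.Ico (m-i+1) (m+1) := by
    intro x hx
    simp at hx
    simp
    omega
  have := Finset.prod_dvd_prod_of_subset _ _ (fun k => (1+k).factorial) hsub
  rw [Finset.prod_pair (by omega)] at this
  have e1 : 1 + (m-1) = m := by omega
  rw [e1, Nat.add_comm 1 m] at this
  exact this

lemma vT_ge1 {i m : ℕ} (h1 : 1 ≤ i) (h : i ≤ m) :
    padicValNat p ((m+1).factorial) ≤
      padicValNat p (∏ k ∈ Finset.Ico (m-i+1) (m+1), (1+k).factorial) :=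
  pv_le_of_dvd (fact_dvd_T h1 h) (T_ne_zero _ _)

lemma vT_ge2 {i m : ℕ} (h1 : 2 ≤ i) (h : i ≤ m) :
    padicValNat p (m.factorial) + padicValNat p ((m+1).factorial) ≤
      padicValNat p (∏ k ∈ Finset.Ico (m-i+1) (m+1), (1+k).factorial) := by
  have := pv_le_of_dvd (p := p) (fact2_dvd_T h1 h) (T_ne_zero (m-i+1) (m+1))
  rwa [padicValNat.mul m.factorial_ne_zero (m+1).factorial_ne_zero] at this

lemma key1 {i m : ℕ} (h1 : 1 ≤ i) (h : i ≤ m) :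
    padicValNat p ((i+1).factorial) + Vv p (m-i) ≤ Vv p m := by
  rw [V_split h]
  have h2 : padicValNat p ((i+1).factorial) ≤ padicValNat p ((m+1).factorial) :=
    pv_le_of_dvd (Nat.factorial_dvd_factorial (by omega)) (m+1).factorial_ne_zero
  have := vT_ge1 (p := p) h1 h
  omega

lemma vfact_succ (m : ℕ) : padicValNat p ((m+1).factorial)
    = padicValNat p (m+1) + padicValNat p (m.factorial) := by
  rw [Nat.factorial_succ, padicValNat.mul (by omega) m.factorial_ne_zero]

lemma key2 {i m : ℕ} (hp2 : padicValNat p 2 = 0) (h1 : 1 ≤ i) (h : i ≤ m) :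
    2 * padicValNat p ((i+1).factorial) + Vv p (m-i) ≤ Vv p m + padicValNat p (m+1) := by
  rw [V_split h]
  rcases eq_or_lt_of_le h1 with rfl | hi2
  · -- i = 1
    have : padicValNat p ((1+1).factorial) = 0 := by norm_num [hp2]
    omega
  rcases eq_or_lt_of_le h with rfl | him
  · -- i = m
    have e := vT_ge2 (p := p) hi2 le_rfl
    have e2 := vfact_succ (p := p) i
    have : Vv p (i - i) = 0 := by
      simp [Vv, Nat.sub_self, Nat.factorial]
    omega
  · -- 2 ≤ i ≤ m - 1
    have e := vT_ge2 (p := p) hi2 h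
    have h2 : padicValNat p ((i+1).factorial) ≤ padicValNat p (m.factorial) :=
      pv_le_of_dvd (Nat.factorial_dvd_factorial (by omega)) m.factorial_ne_zero
    have h3 : padicValNat p ((i+1).factorial) ≤ padicValNat p ((m+1).factorial) :=
      pv_le_of_dvd (Nat.factorial_dvd_factorial (by omega)) (m+1).factorial_ne_zero
    omega

lemma key3 {i m : ℕ} (hp2 : padicValNat p 2 = 0) (h1 : 1 ≤ i) (h : i + 1 ≤ m) :
    padicValNat p ((i+1).factorial) + padicValNat p (m-i+1) + Vv p (m-i)
      ≤ Vv p m + padicValNat p (m+1) := by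
  rw [V_split (i := i) (m := m) (by omega)]
  rcases eq_or_lt_of_le h1 with rfl | hi2
  · -- i = 1
    have e0 : padicValNat p ((1+1).factorial) = 0 := by norm_num [hp2]
    have e1 := vT_ge1 (p := p) h1 (by omega : 1 ≤ m)
    have d2 : (m-1+1) ∣ (m+1).factorial := Nat.dvd_factorial (by omega) (by omega)
    have e2 : padicValNat p (m-1+1) ≤ padicValNat p ((m+1).factorial) :=
      pv_le_of_dvd d2 (m+1).factorial_ne_zero
    omega
  · -- 2 ≤ i ≤ m-1
    have e := vT_ge2 (p := p) (m := m) hi2 (by omega)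
    have h2 : padicValNat p ((i+1).factorial) ≤ padicValNat p (m.factorial) :=
      pv_le_of_dvd (Nat.factorial_dvd_factorial (by omega)) m.factorial_ne_zero
    have d3 : (m-i+1) ∣ (m+1).factorial := Nat.dvd_factorial (by omega) (by omega)
    have h3 : padicValNat p (m-i+1) ≤ padicValNat p ((m+1).factorial) :=
      pv_le_of_dvd d3 (m+1).factorial_ne_zero
    omega

lemma arith1 : ∀ a : ℕ, a ≤ 3^a := by
  intro a
  induction a with
  | zero => simp
  | succ a ih =>
      have h3 : (3:ℕ)^(a+1) = 3^a*3 := by ring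
      have hp : 1 ≤ (3:ℕ)^a := Nat.one_le_pow _ _ (by norm_num)
      omega

lemma arith2' : ∀ b : ℕ, b + 2 < 3^(b+1) := by
  intro b
  induction b with
  | zero => norm_num
  | succ b ih =>
      have h3 : (3:ℕ)^(b+2) = 3^(b+1)*3 := by ring
      have hp : 1 ≤ (3:ℕ)^(b+1) := Nat.one_le_pow _ _ (by norm_num)
      omega

lemma arith2 {a : ℕ} (h : 2 ≤ a) : a < 3^(a-1) := by
  have := arith2' (a-2)
  have e : a - 2 + 2 = a := by omega
  have e2 : a - 2 + 1 = a - 1 := by omega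
  rw [e, e2] at this
  exact this

lemma div_le_vfact {n : ℕ} : n / p ≤ padicValNat p n.factorial := by
  have h1 := padicValNat_mul_div_factorial (p := p) n
  have h2 := padicValNat_factorial_mul (p := p) (n / p)
  omega

lemma vsucc_le_vfact {n : ℕ} (hp2 : p ≠ 2) (hn : 1 ≤ n)
    (hne : n ≠ p - 1) : padicValNat p (n+1) ≤ padicValNat p n.factorial := by
  have hpf : Fact p.Prime := inferInstance
  rcases Nat.eq_zero_or_pos (padicValNat p (n+1)) with h0 | hapos
  · omega
  obtain ⟨c, hc⟩ : p ^ (padicValNat p (n+1)) ∣ n + 1 := pow_padicValNat_dvd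
  generalize haa : padicValNat p (n+1) = a at *
  have hp3 : 3 ≤ p := by have := hpf.out.two_le; omega
  have hc1 : 1 ≤ c := by
    rcases Nat.eq_zero_or_pos c with rfl | h
    · omega
    · omega
  have hpow : p ^ (a-1) * p = p ^ a := by
    rw [← pow_succ]
    congr 1
    omega
  have h3p : (3:ℕ)^(a-1) ≤ p^(a-1) := Nat.pow_le_pow_left hp3 _
  have hle : a ≤ 3 ^ (a-1) * 3 := by
    have e : (3:ℕ)^(a-1)*3 = 3^(a-1+1) := by ring
    have e2 : a - 1 + 1 = a := by omega
    rw [e, e2]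
    exact arith1 a
  have hlep : a * p ≤ p ^ (a - 1) * p * p := by
    have : a ≤ p^(a-1)*p := le_trans hle (Nat.mul_le_mul h3p (by omega))
    exact Nat.mul_le_mul_right p this
  -- show a * p ≤ n
  have hap : a * p ≤ n := by
    rcases eq_or_lt_of_le hc1 with rfl | hc2
    · -- n + 1 = p ^ a
      have ha2 : 2 ≤ a := by
        rcases Nat.lt_or_ge a 2 with h | h
        · exfalso
          apply hne
          have ha1 : a = 1 := by omega
          rw [ha1, pow_one] at hc
          omega
        · exact h
      have h10 := arith2 ha2
      have h5 : a + 1 ≤ p^(a-1) := by omega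
      have h6 : (a+1) * p ≤ p^(a-1) * p := Nat.mul_le_mul_right p h5
      have h8 : (a+1)*p = a*p + p := by ring
      omega
    · -- c ≥ 2
      have h7 : p ^ a * 2 ≤ p ^ a * c := Nat.mul_le_mul_left _ (by omega)
      have h9 : a * p ≤ p^(a-1) * p := by
        have h11 : a * p ≤ (3^(a-1)*3) * p := Nat.mul_le_mul_right p hle
        have h12 : (3^(a-1)*3) * p ≤ (p^(a-1)*p) * p := by
          exact Nat.mul_le_mul_right p (Nat.mul_le_mul h3p (by omega))
        -- this gives a*p ≤ p^a * p, too weak; instead use a ≤ p^(a-1) ... 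
        have h13 : a ≤ p ^ (a-1) := by
          rcases Nat.lt_or_ge a 2 with h | h
          · have : 1 ≤ p ^ (a-1) := Nat.one_le_pow _ _ (by omega)
            omega
          · have := arith2 h
            omega
        exact Nat.mul_le_mul_right p h13
      omega
  have hdiv : a ≤ n / p := (Nat.le_div_iff_mul_le (by omega)).mpr hap
  exact le_trans hdiv div_le_vfact
lemma norm_nat_eq {k : ℕ} (hk : k ≠ 0) :
    padicNorm p (k : ℚ) = (p:ℚ) ^ (-(padicValNat p k : ℤ)) := by
  rw [padicNorm.eq_zpow_of_nonzero (by exact_mod_cast hk)]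
  congr 1
  rw [padicValRat.of_nat]

lemma zpow_mono_p {a b : ℤ} (h : a ≤ b) : (p:ℚ)^a ≤ (p:ℚ)^b :=
  zpow_le_zpow_right₀ (by exact_mod_cast hpf.out.one_lt.le) h

lemma zpow_strict_p {a b : ℤ} (h : a < b) : (p:ℚ)^a < (p:ℚ)^b :=
  zpow_lt_zpow_right₀ (by exact_mod_cast hpf.out.one_lt) h

noncomputable def PP (N i : ℕ) : ℚ := ∏ k ∈ Finset.range i, ((N + 1 + k : ℕ) : ℚ)

lemma PP_ne_zero (N i : ℕ) : PP N i ≠ 0 := by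
  unfold PP
  refine Finset.prod_ne_zero_iff.mpr fun k _ => ?_
  positivity

lemma nat_pp (N i : ℕ) : (N+i).factorial = N.factorial * ∏ k ∈ Finset.range i, (N+1+k) := by
  induction i with
  | zero => simp
  | succ i ih =>
      rw [Finset.prod_range_succ, ← Nat.mul_assoc, ← ih]
      rw [show N + (i+1) = (N + i) + 1 by omega, Nat.factorial_succ]
      ring

lemma PP_cast (N i : ℕ) : ((N+i).factorial : ℚ) = (N.factorial : ℚ) * PP N i := by
  rw [nat_pp N i]
  push_cast [PP]
  ring

lemma PP_one (i : ℕ) : PP 1 i = ((i+1).factorial : ℚ) := by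
  have := PP_cast 1 i
  rw [Nat.add_comm 1 i] at this
  symm
  simpa using this

section ctx
variable {N M n : ℕ}
  (hNq : padicNorm p ((N:ℚ) - 1) ≤ (p:ℚ)^(-(M:ℤ)))
  (hsmall : ∀ t : ℕ, 2 ≤ t → t ≤ n+1 → padicValNat p t < M)

include hNq hsmall in
lemma norm_factor {k : ℕ} (hk : k + 2 ≤ n + 1) :
    padicNorm p ((N+1+k : ℕ):ℚ) = padicNorm p ((k+2 : ℕ):ℚ) := by
  have hsplit : ((N+1+k : ℕ):ℚ) = ((N:ℚ) - 1) + ((k+2 : ℕ):ℚ) := by push_cast; ring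
  have hv : padicValNat p (k+2) < M := hsmall (k+2) (by omega) hk
  have hr : padicNorm p ((k+2 : ℕ):ℚ) = (p:ℚ)^(-(padicValNat p (k+2) : ℤ)) :=
    norm_nat_eq (by omega)
  have hlt : padicNorm p ((N:ℚ) - 1) < padicNorm p ((k+2 : ℕ):ℚ) := by
    rw [hr]
    exact lt_of_le_of_lt hNq (zpow_strict_p (by omega))
  rw [hsplit, padicNorm.add_eq_max_of_ne (ne_of_lt hlt), max_eq_right hlt.le]

include hNq hsmall in
lemma norm_PP_diff : ∀ i : ℕ, padicNorm p (PP 1 i - PP N i) ≤ (p:ℚ)^(-(M:ℤ)) := by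
  intro i
  induction i with
  | zero =>
      simp [PP]
  | succ i ih =>
      have e : PP 1 (i+1) - PP N (i+1)
          = ((N+1+i : ℕ):ℚ) * (PP 1 i - PP N i) + (-((N:ℚ)-1)) * PP 1 i := by
        unfold PP
        rw [Finset.prod_range_succ, Finset.prod_range_succ]
        push_cast
        ring
      rw [e]
      refine le_trans padicNorm.nonarchimedean (max_le ?_ ?_)
      · rw [padicNorm.mul]
        calc padicNorm p ((N+1+i : ℕ):ℚ) * padicNorm p (PP 1 i - PP N i)
            ≤ 1 * (p:ℚ)^(-(M:ℤ)) := by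
              refine mul_le_mul (padicNorm.of_nat _) ih (padicNorm.nonneg _) zero_le_one
          _ = (p:ℚ)^(-(M:ℤ)) := one_mul _
      · rw [padicNorm.mul, padicNorm.neg, PP_one]
        calc padicNorm p ((N:ℚ)-1) * padicNorm p (((i+1).factorial : ℕ):ℚ)
            ≤ (p:ℚ)^(-(M:ℤ)) * 1 :=
              mul_le_mul hNq (padicNorm.of_nat _) (padicNorm.nonneg _) (by positivity)
          _ = (p:ℚ)^(-(M:ℤ)) := mul_one _

include hNq hsmall in
lemma norm_PP_eq : ∀ i : ℕ, i ≤ n →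
    padicNorm p (PP N i) = (p:ℚ)^(-(padicValNat p (i+1).factorial : ℤ)) := by
  intro i
  induction i with
  | zero =>
      intro _
      simp [PP, Nat.factorial]
  | succ i ih =>
      intro hi
      have e1 : PP N (i+1) = PP N i * ((N+1+i : ℕ):ℚ) := Finset.prod_range_succ _ _
      have e2 : PP 1 (i+1) = PP 1 i * ((1+1+i : ℕ):ℚ) := Finset.prod_range_succ _ _
      have heq : padicNorm p (PP N (i+1)) = padicNorm p (PP 1 (i+1)) := by
        rw [e1, e2, padicNorm.mul, padicNorm.mul]
        congr 1
        · -- norms of PP N i and PP 1 i: use previous with rewriting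
          have := ih (by omega)
          rw [this, PP_one, norm_nat_eq (Nat.factorial_ne_zero _)]
        · have e3 : 1 + 1 + i = i + 2 := by omega
          rw [e3]
          exact norm_factor hNq hsmall (k := i) (by omega)
      rw [heq, PP_one, norm_nat_eq (Nat.factorial_ne_zero _)]

lemma pnorm_inv (x : ℚ) : padicNorm p x⁻¹ = (padicNorm p x)⁻¹ := by
  rw [← one_div, padicNorm.div, padicNorm.one, one_div]

lemma norm_PP_one (i : ℕ) :
    padicNorm p (PP 1 i) = (p:ℚ)^(-(padicValNat p (i+1).factorial : ℤ)) := by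
  rw [PP_one, norm_nat_eq (Nat.factorial_ne_zero _)]

lemma hc_inv (N i : ℕ) :
    (N.factorial : ℚ) / ((N + i).factorial : ℚ) = (PP N i)⁻¹ := by
  rw [PP_cast N i, div_mul_eq_div_div, div_self (by exact_mod_cast N.factorial_ne_zero),
    one_div]

include hNq hsmall in
lemma norm_hc_eq {i : ℕ} (hi : i ≤ n) :
    padicNorm p ((N.factorial : ℚ) / ((N + i).factorial : ℚ))
      = (p:ℚ)^((padicValNat p (i+1).factorial : ℤ)) := by
  rw [hc_inv N i, pnorm_inv, norm_PP_eq hNq hsmall i hi, ← zpow_neg, neg_neg]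

include hNq hsmall in
lemma norm_hc_diff {i : ℕ} (hi : i ≤ n) :
    padicNorm p ((N.factorial : ℚ) / ((N + i).factorial : ℚ)
        - ((1 : ℕ).factorial : ℚ) / (((1 + i : ℕ)).factorial : ℚ))
      ≤ (p:ℚ)^(-(M:ℤ) + 2*(padicValNat p (i+1).factorial : ℤ)) := by
  have e : (N.factorial : ℚ) / ((N + i).factorial : ℚ)
        - ((1 : ℕ).factorial : ℚ) / (((1 + i : ℕ)).factorial : ℚ)
      = (PP 1 i - PP N i) * (PP N i)⁻¹ * (PP 1 i)⁻¹ := by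
    rw [hc_inv N i, hc_inv 1 i, inv_sub_inv (PP_ne_zero N i) (PP_ne_zero 1 i),
      div_eq_mul_inv, mul_inv]
    ring
  rw [e, padicNorm.mul, padicNorm.mul, pnorm_inv, pnorm_inv,
    norm_PP_eq hNq hsmall i hi, norm_PP_one]
  simp only [← zpow_neg, neg_neg]
  calc padicNorm p (PP 1 i - PP N i) * (p:ℚ)^((padicValNat p (i+1).factorial : ℤ))
          * (p:ℚ)^((padicValNat p (i+1).factorial : ℤ))
      ≤ (p:ℚ)^(-(M:ℤ)) * (p:ℚ)^((padicValNat p (i+1).factorial : ℤ))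
          * (p:ℚ)^((padicValNat p (i+1).factorial : ℤ)) := by
        have h0 : (0:ℚ) < (p:ℚ)^((padicValNat p (i+1).factorial : ℤ)) := by
          refine zpow_pos ?_ _
          exact_mod_cast hpf.out.pos
        have h1 := norm_PP_diff hNq hsmall i
        have h2 := mul_le_mul_of_nonneg_right h1 h0.le
        exact mul_le_mul_of_nonneg_right h2 h0.le
    _ = (p:ℚ)^(-(M:ℤ) + 2*(padicValNat p (i+1).factorial : ℤ)) := by
        rw [← zpow_add₀ (by exact_mod_cast hpf.out.ne_zero),
            ← zpow_add₀ (by exact_mod_cast hpf.out.ne_zero)]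
        congr 1
        ring

end ctx
end A
section main
variable {p : ℕ} [hpf : Fact p.Prime] {N M n : ℕ}
  (hNq : padicNorm p ((N:ℚ) - 1) ≤ (p:ℚ)^(-(M:ℤ)))
  (hsmall : ∀ t : ℕ, 2 ≤ t → t ≤ n+1 → padicValNat p t < M)

lemma hp0 : ((p:ℚ)) ≠ 0 := by
  exact_mod_cast hpf.out.ne_zero

include hNq hsmall in
lemma abound : ∀ m, m ≤ n → padicNorm p (ha N m) ≤ (p:ℚ)^((Vv p m : ℤ)) := by
  intro m
  induction m using Nat.strong_induction_on with
  | _ m ih =>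
    intro hm
    rcases Nat.eq_zero_or_pos m with rfl | hm1
    · rw [ha_zero, padicNorm.one]
      calc (1:ℚ) = (p:ℚ)^(0:ℤ) := (zpow_zero _).symm
        _ ≤ (p:ℚ)^((Vv p 0 : ℤ)) := zpow_mono_p (by omega)
    · rw [ha_recur N m hm1, padicNorm.neg]
      refine padicNorm.sum_le (Finset.nonempty_Icc.mpr hm1) ?_
      intro i hi
      simp only [Finset.mem_Icc] at hi
      have hnc : padicNorm p (hc N i) = (p:ℚ)^((padicValNat p (i+1).factorial : ℤ)) :=
        norm_hc_eq hNq hsmall (le_trans hi.2 hm)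
      rw [padicNorm.mul, hnc]
      have hz : (0:ℚ) ≤ (p:ℚ)^((padicValNat p (i+1).factorial : ℤ)) := by positivity
      calc (p:ℚ)^((padicValNat p (i+1).factorial : ℤ)) * padicNorm p (ha N (m-i))
          ≤ (p:ℚ)^((padicValNat p (i+1).factorial : ℤ)) * (p:ℚ)^((Vv p (m-i) : ℤ)) :=
            mul_le_mul_of_nonneg_left (ih (m-i) (by omega) (by omega)) hz
        _ = (p:ℚ)^((padicValNat p (i+1).factorial : ℤ) + (Vv p (m-i) : ℤ)) :=
            (zpow_add₀ hp0 _ _).symm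
        _ ≤ (p:ℚ)^((Vv p m : ℤ)) := by
            refine zpow_mono_p ?_
            have := key1 (p := p) hi.1 hi.2
            omega

lemma hNq1 : padicNorm p (((1:ℕ):ℚ) - 1) ≤ (p:ℚ)^(-(M:ℤ)) := by
  have e : ((1:ℕ):ℚ) - 1 = 0 := by norm_num
  rw [e, padicNorm.zero]
  positivity

include hNq hsmall in
lemma dbound (hvp2 : padicValNat p 2 = 0) (hN1 : 1 ≤ N) :
    ∀ m, m ≤ n → padicNorm p (ha N m - ha 1 m)
      ≤ (p:ℚ)^(-(M:ℤ) + (Vv p m : ℤ) + (padicValNat p (m+1) : ℤ)) := by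
  intro m
  induction m using Nat.strong_induction_on with
  | _ m ih =>
    intro hm
    rcases Nat.eq_zero_or_pos m with rfl | hm1
    · rw [ha_zero, ha_zero, sub_self, padicNorm.zero]
      positivity
    · have e : ha N m - ha 1 m
          = ∑ i ∈ Finset.Icc 1 m, (hc 1 i * ha 1 (m-i) - hc N i * ha N (m-i)) := by
        rw [ha_recur N m hm1, ha_recur 1 m hm1, Finset.sum_sub_distrib]
        ring
      rw [e]
      refine padicNorm.sum_le (Finset.nonempty_Icc.mpr hm1) ?_
      intro i hi
      simp only [Finset.mem_Icc] at hi
      have hsplit : hc 1 i * ha 1 (m-i) - hc N i * ha N (m-i)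
          = -((hc N i - hc 1 i) * ha N (m-i)) - hc 1 i * (ha N (m-i) - ha 1 (m-i)) := by
        ring
      rw [hsplit]
      refine le_trans (padicNorm.sub) (max_le ?_ ?_)
      · -- first term
        rw [padicNorm.neg, padicNorm.mul]
        have h1 : padicNorm p (hc N i - hc 1 i)
            ≤ (p:ℚ)^(-(M:ℤ) + 2*(padicValNat p (i+1).factorial : ℤ)) :=
          norm_hc_diff hNq hsmall (le_trans hi.2 hm)
        have h2 : padicNorm p (ha N (m-i)) ≤ (p:ℚ)^((Vv p (m-i) : ℤ)) :=
          abound hNq hsmall (m-i) (by omega)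
        calc padicNorm p (hc N i - hc 1 i) * padicNorm p (ha N (m-i))
            ≤ (p:ℚ)^(-(M:ℤ) + 2*(padicValNat p (i+1).factorial : ℤ))
                * (p:ℚ)^((Vv p (m-i) : ℤ)) :=
              mul_le_mul h1 h2 (padicNorm.nonneg _) (by positivity)
          _ = (p:ℚ)^(-(M:ℤ) + 2*(padicValNat p (i+1).factorial : ℤ) + (Vv p (m-i) : ℤ)) :=
              (zpow_add₀ hp0 _ _).symm
          _ ≤ (p:ℚ)^(-(M:ℤ) + (Vv p m : ℤ) + (padicValNat p (m+1) : ℤ)) := by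
              refine zpow_mono_p ?_
              have := key2 (p := p) hvp2 hi.1 hi.2
              omega
      · -- second term
        rcases eq_or_lt_of_le hi.2 with rfl | him
        · -- i = m : difference term is zero
          rw [Nat.sub_self, ha_zero, ha_zero, sub_self, mul_zero, padicNorm.zero]
          positivity
        · rw [padicNorm.mul]
          have h1 : padicNorm p (hc 1 i) = (p:ℚ)^((padicValNat p (i+1).factorial : ℤ)) :=
            norm_hc_eq hNq1 hsmall (le_trans hi.2 hm)
          have h2 : padicNorm p (ha N (m-i) - ha 1 (m-i))
              ≤ (p:ℚ)^(-(M:ℤ) + (Vv p (m-i) : ℤ) + (padicValNat p (m-i+1) : ℤ)) :=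
            ih (m-i) (by omega) (by omega)
          rw [h1]
          calc (p:ℚ)^((padicValNat p (i+1).factorial : ℤ)) * padicNorm p (ha N (m-i) - ha 1 (m-i))
              ≤ (p:ℚ)^((padicValNat p (i+1).factorial : ℤ))
                  * (p:ℚ)^(-(M:ℤ) + (Vv p (m-i) : ℤ) + (padicValNat p (m-i+1) : ℤ)) :=
                mul_le_mul_of_nonneg_left h2 (by positivity)
            _ = (p:ℚ)^((padicValNat p (i+1).factorial : ℤ)
                  + (-(M:ℤ) + (Vv p (m-i) : ℤ) + (padicValNat p (m-i+1) : ℤ))) :=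
                (zpow_add₀ hp0 _ _).symm
            _ ≤ (p:ℚ)^(-(M:ℤ) + (Vv p m : ℤ) + (padicValNat p (m+1) : ℤ)) := by
                refine zpow_mono_p ?_
                have := key3 (p := p) (m := m) hvp2 hi.1 (by omega)
                omega

end main

theorem stmt5 (p : ℕ) (hp : p.Prime) (N n ν : ℕ) (hN : 1 ≤ N) (hn : 1 ≤ n)
    (hndvd : ¬ (p - 1) ∣ n)
    (hval : ν + 1 + padicValNat p (∏ k ∈ Finset.range (n + 1), (1 + k).factorial)
        + padicValNat p n ≤ padicValNat p (N - 1)) :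
    padicNorm p (hB N n / n - bernoulli n / n) ≤ (p : ℚ) ^ (-(ν + 1 : ℤ)) := by
  haveI hpf : Fact p.Prime := ⟨hp⟩
  have hp2 : p ≠ 2 := by rintro rfl; exact hndvd (by norm_num)
  have hvp2 : padicValNat p 2 = 0 := by
    refine padicValNat.eq_zero_of_not_dvd (fun h => hp2 ?_)
    have h1 := Nat.le_of_dvd (by norm_num) h
    have h2 := hp.two_le
    omega
  have hne : n ≠ p - 1 := by
    rintro rfl
    exact hndvd dvd_rfl
  set M := padicValNat p (N - 1) with hM
  have hVv : padicValNat p (∏ k ∈ Finset.range (n + 1), (1 + k).factorial) = Vv p n := rfl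
  rw [hVv] at hval
  have hN2 : 2 ≤ N := by
    rcases Nat.lt_or_ge N 2 with h | h
    · exfalso
      have hN1 : N = 1 := by omega
      rw [hM, hN1] at hval
      simp at hval
    · exact h
  have hNq : padicNorm p ((N:ℚ) - 1) ≤ (p:ℚ)^(-(M:ℤ)) := by
    have e : (N:ℚ) - 1 = ((N - 1 : ℕ) : ℚ) := by
      push_cast [Nat.cast_sub hN]
      ring
    rw [e, norm_nat_eq (by omega), hM]
  have hsmall : ∀ t : ℕ, 2 ≤ t → t ≤ n+1 → padicValNat p t < M := by
    intro t h2 hle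
    have hd : t ∣ (n+1).factorial := Nat.dvd_factorial (by omega) hle
    have h3 : padicValNat p t ≤ padicValNat p ((n+1).factorial) :=
      pv_le_of_dvd hd (n+1).factorial_ne_zero
    have h4 : padicValNat p ((n+1).factorial) ≤ Vv p n := by
      refine pv_le_of_dvd ?_ (Q_ne_zero n)
      have hm : n ∈ Finset.range (n+1) := by simp
      have hdd := Finset.dvd_prod_of_mem (fun k => (1+k).factorial) hm
      simp only [Nat.add_comm 1 n] at hdd
      exact hdd
    omega
  have hdb := dbound hNq hsmall hvp2 hN n (le_refl n)
  have hfne : ((n.factorial : ℚ)) ≠ 0 := by exact_mod_cast n.factorial_ne_zero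
  have hanb : ha 1 n = bernoulli n / n.factorial := ha_one n
  have hexpr : hB N n / n - bernoulli n / n
      = ((n.factorial : ℚ) / n) * (ha N n - ha 1 n) := by
    have h1 : hB N n = (n.factorial : ℚ) * ha N n := rfl
    have h2 : (bernoulli n : ℚ) = (n.factorial : ℚ) * ha 1 n := by
      rw [hanb]
      field_simp
    rw [h1, h2]
    ring
  rw [hexpr, padicNorm.mul, padicNorm.div,
    norm_nat_eq (p := p) n.factorial_ne_zero, norm_nat_eq (p := p) (by omega : n ≠ 0),
    ← zpow_sub₀ (hp0 (p := p))]
  have hvs := vsucc_le_vfact (p := p) hp2 hn hne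
  calc (p:ℚ)^(-(padicValNat p n.factorial : ℤ) - -(padicValNat p n : ℤ))
        * padicNorm p (ha N n - ha 1 n)
      ≤ (p:ℚ)^(-(padicValNat p n.factorial : ℤ) - -(padicValNat p n : ℤ))
        * (p:ℚ)^(-(M:ℤ) + (Vv p n : ℤ) + (padicValNat p (n+1) : ℤ)) :=
        mul_le_mul_of_nonneg_left hdb (by positivity)
    _ = (p:ℚ)^((-(padicValNat p n.factorial : ℤ) - -(padicValNat p n : ℤ))
        + (-(M:ℤ) + (Vv p n : ℤ) + (padicValNat p (n+1) : ℤ))) :=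
        (zpow_add₀ (hp0 (p := p)) _ _).symm
    _ ≤ (p : ℚ) ^ (-(ν + 1 : ℤ)) := by
        refine zpow_mono_p ?_
        omega
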